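/- Fix integers m, n ≥ 1, let x₀ > 0 and ψ : [x₀, ∞) → (0, ∞) be continuous and non-increasing. Then there exists a unique continuous function r : [t₀, ∞) → ℝ, where t₀ = (m/(m+n)) log x₀ − (n/(m+n)) log ψ(x₀), such that: (a) t ↦ t − n r(t) is strictly increasing and tends to +∞; (b) t ↦ t + m r(t) is non-decreasing; (c) ψ(e^{t − n r(t)}) = e^{−t − m r(t)} for all t ≥ t₀. -/

import Mathlib

open Filter Set

set_option maxHeartbeats 1600000

/-- Lemma 8.3: the Dani correspondence ψ ↦ r, existence and uniqueness. -/
theorem stmt_9 (m n : ℕ) (hm : 1 ≤ m) (hn : 1 ≤ n) (x₀ : ℝ) (hx₀ : 0 < x₀)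
    (ψ : ℝ → ℝ) (hcont : ContinuousOn ψ (Ici x₀)) (hanti : AntitoneOn ψ (Ici x₀))
    (hpos : ∀ x ∈ Ici x₀, 0 < ψ x)
    (t₀ : ℝ)
    (ht₀ : t₀ = ((m : ℝ) / (m + n)) * Real.log x₀ - ((n : ℝ) / (m + n)) * Real.log (ψ x₀)) :
    (∃ r : ℝ → ℝ, ContinuousOn r (Ici t₀) ∧
      StrictMonoOn (fun t => t - n * r t) (Ici t₀) ∧
      Tendsto (fun t => t - n * r t) atTop atTop ∧
      MonotoneOn (fun t => t + m * r t) (Ici t₀) ∧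
      ∀ t ∈ Ici t₀, ψ (Real.exp (t - n * r t)) = Real.exp (-t - m * r t)) ∧
    (∀ r₁ r₂ : ℝ → ℝ,
      (ContinuousOn r₁ (Ici t₀) ∧
        StrictMonoOn (fun t => t - n * r₁ t) (Ici t₀) ∧
        Tendsto (fun t => t - n * r₁ t) atTop atTop ∧
        MonotoneOn (fun t => t + m * r₁ t) (Ici t₀) ∧
        ∀ t ∈ Ici t₀, ψ (Real.exp (t - n * r₁ t)) = Real.exp (-t - m * r₁ t)) →
      (ContinuousOn r₂ (Ici t₀) ∧
        StrictMonoOn (fun t => t - n * r₂ t) (Ici t₀) ∧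
        Tendsto (fun t => t - n * r₂ t) atTop atTop ∧
        MonotoneOn (fun t => t + m * r₂ t) (Ici t₀) ∧
        ∀ t ∈ Ici t₀, ψ (Real.exp (t - n * r₂ t)) = Real.exp (-t - m * r₂ t)) →
      EqOn r₁ r₂ (Ici t₀)) := by
  have hm1 : (1:ℝ) ≤ (m:ℝ) := by exact_mod_cast hm
  have hn1 : (1:ℝ) ≤ (n:ℝ) := by exact_mod_cast hn
  have hm0 : (0:ℝ) < (m:ℝ) := by linarith
  have hn0 : (0:ℝ) < (n:ℝ) := by linarith
  have hmn : (0:ℝ) < (m:ℝ) + n := by linarith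
  set a : ℝ := Real.log x₀ with ha
  have hexpa : Real.exp a = x₀ := Real.exp_log hx₀
  have hmem : ∀ l : ℝ, a ≤ l → Real.exp l ∈ Ici x₀ := by
    intro l hl
    rw [mem_Ici, ← hexpa]
    exact Real.exp_le_exp.mpr hl
  set P : ℝ → ℝ := fun l => -Real.log (ψ (Real.exp l)) with hP
  have hPmono : MonotoneOn P (Ici a) := by
    intro u hu v hv huv
    have h1 : ψ (Real.exp v) ≤ ψ (Real.exp u) :=
      hanti (hmem u hu) (hmem v hv) (Real.exp_le_exp.mpr huv)
    have h2 : 0 < ψ (Real.exp v) := hpos _ (hmem v hv)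
    have h3 : Real.log (ψ (Real.exp v)) ≤ Real.log (ψ (Real.exp u)) :=
      Real.log_le_log h2 h1
    simp only [hP]
    linarith
  have hPcont : ContinuousOn P (Ici a) := by
    have h1 : ContinuousOn (fun l => ψ (Real.exp l)) (Ici a) :=
      hcont.comp Real.continuous_exp.continuousOn (fun l hl => hmem l hl)
    have h2 : ContinuousOn (fun l => Real.log (ψ (Real.exp l))) (Ici a) :=
      Real.continuousOn_log.comp h1 (by
        intro l hl
        exact (hpos _ (hmem l hl)).ne' )
    exact h2.neg
  -- the key strictly monotone map
  have hΦ : StrictMonoOn (fun l => (m:ℝ) * l + n * P l) (Ici a) := by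
    intro u hu v hv huv
    have h1 : P u ≤ P v := hPmono hu hv huv.le
    have h2 : (m:ℝ) * u < m * v := by nlinarith
    show (m:ℝ) * u + n * P u < (m:ℝ) * v + n * P v
    nlinarith
  have hPa : P a = -Real.log (ψ x₀) := by simp only [hP, hexpa]
  have ht₀' : ((m:ℝ) + n) * t₀ = m * a + n * P a := by
    rw [ht₀, hPa]
    field_simp
    ring
  constructor
  · -- Existence
    set Q : ℝ → ℝ := fun l => P (max l a) + min (l - a) 0 with hQ
    have hQmono : Monotone Q := by
      have h1 : Monotone fun l => P (max l a) := by
        intro u v huv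
        exact hPmono (mem_Ici.mpr (le_max_right u a)) (mem_Ici.mpr (le_max_right v a))
          (max_le_max huv le_rfl)
      have h2 : Monotone fun l : ℝ => min (l - a) 0 :=
        Monotone.min (fun u v huv => by simpa using sub_le_sub_right huv a) monotone_const
      exact h1.add h2
    have hQcont : Continuous Q := by
      have h1 : Continuous fun l => P (max l a) :=
        hPcont.comp_continuous (continuous_id.max continuous_const)
          (fun l => mem_Ici.mpr (le_max_right l a))
      exact h1.add ((continuous_id.sub continuous_const).min continuous_const)
    set G : ℝ → ℝ := fun l => ((m:ℝ) * l + n * Q l) / (m + n) with hG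
    have hGs : StrictMono G := by
      intro u v huv
      have h1 : Q u ≤ Q v := hQmono huv.le
      have h2 : (m:ℝ) * u + n * Q u < m * v + n * Q v := by nlinarith
      exact (div_lt_div_iff_of_pos_right hmn).mpr h2
    have hGc : Continuous G :=
      ((continuous_const.mul continuous_id).add (continuous_const.mul hQcont)).div_const _
    have hGtop : Tendsto G atTop atTop := by
      have hf : Tendsto (fun l => ((m:ℝ) * l + n * Q a) / (m + n)) atTop atTop := by
        apply Tendsto.atTop_div_const hmn
        exact tendsto_atTop_add_const_right atTop _ (tendsto_id.const_mul_atTop hm0)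
      apply tendsto_atTop_mono' atTop _ hf
      filter_upwards [eventually_ge_atTop a] with l hl
      have h1 : Q a ≤ Q l := hQmono hl
      exact (div_le_div_iff_of_pos_right hmn).mpr (by nlinarith)
    have hGbot : Tendsto G atBot atBot := by
      have hf : Tendsto (fun l => l + ((n:ℝ) * P a - n * a) / (m + n)) atBot atBot :=
        tendsto_atBot_add_const_right atBot _ tendsto_id
      apply tendsto_atBot_mono' atBot _ hf
      filter_upwards [eventually_le_atBot a] with l hl
      have h1 : max l a = a := max_eq_right hl
      have h2 : min (l - a) 0 = l - a := min_eq_left (by linarith)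
      have : G l = l + ((n:ℝ) * P a - n * a) / (m + n) := by
        simp only [hG, hQ, h1, h2]
        field_simp
        ring
      exact this.le
    have hsurj : Function.Surjective G := hGc.surjective hGtop hGbot
    let e : ℝ ≃o ℝ := StrictMono.orderIsoOfSurjective G hGs hsurj
    have hecoe : ∀ l, e l = G l := fun l => rfl
    have hGa : G a = t₀ := by
      have h1 : max a a = a := max_self a
      have h2 : min (a - a) 0 = 0 := by rw [sub_self]; exact min_self 0
      simp only [hG, hQ, h1, h2, add_zero]
      rw [div_eq_iff hmn.ne']
      linarith [ht₀']
    have hlge : ∀ t, t₀ ≤ t → a ≤ e.symm t := by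
      intro t htt
      have h1 : e a ≤ t := by rw [hecoe a, hGa]; exact htt
      have h2 := e.symm.monotone h1
      rwa [e.symm_apply_apply] at h2
    have hGl : ∀ t, G (e.symm t) = t := fun t => by
      rw [← hecoe]; exact e.apply_symm_apply t
    have hkey : ∀ t, t₀ ≤ t → (m:ℝ) * (e.symm t) + n * P (e.symm t) = ((m:ℝ) + n) * t := by
      intro t htt
      have hla := hlge t htt
      have h1 := hGl t
      have hq1 : max (e.symm t) a = e.symm t := max_eq_left hla
      have hq2 : min (e.symm t - a) 0 = 0 := min_eq_right (by linarith)
      simp only [hG, hQ, hq1, hq2, add_zero] at h1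
      rw [div_eq_iff hmn.ne'] at h1
      linarith
    refine ⟨fun t => (t - e.symm t) / n, ?_, ?_, ?_, ?_, ?_⟩
    · exact ((continuous_id.sub e.symm.continuous).div_const _).continuousOn
    · intro s hs t ht hst
      have h1 : ∀ u : ℝ, u - (n:ℝ) * ((u - e.symm u) / n) = e.symm u := by
        intro u; field_simp; ring
      simp only [h1]
      exact e.symm.strictMono hst
    · have h1 : ∀ u : ℝ, u - (n:ℝ) * ((u - e.symm u) / n) = e.symm u := by
        intro u; field_simp; ring
      simp only [h1]
      exact tendsto_atTop_atTop_of_monotone e.symm.monotone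
        (fun b => ⟨e b, (e.symm_apply_apply b).ge⟩)
    · intro s hs t ht hst
      have h1 : ∀ u ∈ Ici t₀, u + (m:ℝ) * ((u - e.symm u) / n) = P (e.symm u) := by
        intro u hu
        have := hkey u hu
        field_simp
        nlinarith
      simp only
      rw [h1 s hs, h1 t ht]
      exact hPmono (hlge s hs) (hlge t ht) (e.symm.monotone hst)
    · intro t ht
      have hla := hlge t ht
      have h1 : t - (n:ℝ) * ((t - e.symm t) / n) = e.symm t := by field_simp; ring
      have h2 : t + (m:ℝ) * ((t - e.symm t) / n) = P (e.symm t) := by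
        have := hkey t ht
        field_simp
        nlinarith
      rw [h1, show -t - (m:ℝ) * ((t - e.symm t) / n) = -(t + (m:ℝ) * ((t - e.symm t) / n)) by ring,
        h2]
      simp only [hP, neg_neg]
      exact (Real.exp_log (hpos _ (hmem _ hla))).symm
  · -- Uniqueness
    have key : ∀ r : ℝ → ℝ,
        (ContinuousOn r (Ici t₀) ∧
          StrictMonoOn (fun t => t - n * r t) (Ici t₀) ∧
          Tendsto (fun t => t - n * r t) atTop atTop ∧
          MonotoneOn (fun t => t + m * r t) (Ici t₀) ∧
          ∀ t ∈ Ici t₀, ψ (Real.exp (t - n * r t)) = Real.exp (-t - m * r t)) →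
        ∀ t ∈ Ici t₀, a ≤ t - n * r t ∧
          (m:ℝ) * (t - n * r t) + n * P (t - n * r t) = ((m:ℝ) + n) * t := by
      intro r ⟨hc, hsm, htt, hmono, heq⟩ t ht
      have hcf : ContinuousOn (fun s => s - (n:ℝ) * r s) (Ici t₀) :=
        continuousOn_id.sub (continuousOn_const.mul hc)
      have hge : a ≤ t - n * r t := by
        by_contra hlt
        push_neg at hlt
        obtain ⟨u, hua, hut⟩ := ((htt.eventually_ge_atTop a).and (eventually_ge_atTop t)).exists
        have hIcc : Icc t u ⊆ Ici t₀ := fun v hv => le_trans ht hv.1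
        have hIVT := intermediate_value_Icc hut (hcf.mono hIcc)
        have hamem : a ∈ Icc (t - (n:ℝ) * r t) (u - (n:ℝ) * r u) := ⟨hlt.le, hua⟩
        obtain ⟨τ, hτmem, hτ⟩ := hIVT hamem
        have hτt₀ : τ ∈ Ici t₀ := hIcc hτmem
        have heqτ := heq τ hτt₀
        simp only at hτ
        rw [hτ, hexpa] at heqτ
        have hlog : Real.log (ψ x₀) = -τ - m * r τ := by
          rw [heqτ, Real.log_exp]
        have hτeq : ((m:ℝ) + n) * τ = ((m:ℝ) + n) * t₀ := by
          rw [ht₀']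
          have h1 : τ - (n:ℝ) * r τ = a := hτ
          nlinarith [hlog, h1]
        have hττ : τ = t₀ := mul_left_cancel₀ hmn.ne' hτeq
        have htlt : t < τ := by
          have hflt : t - (n:ℝ) * r t < τ - (n:ℝ) * r τ := by rw [hτ]; exact hlt
          exact (hsm.lt_iff_lt ht hτt₀).mp hflt
        rw [hττ] at htlt
        exact absurd (lt_of_le_of_lt ht htlt) (lt_irrefl t₀)
      refine ⟨hge, ?_⟩
      have heqt := heq t ht
      have hlog : Real.log (ψ (Real.exp (t - n * r t))) = -t - m * r t := by
        rw [heqt, Real.log_exp]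
      have hPt : P (t - n * r t) = t + m * r t := by
        simp only [hP]
        rw [hlog]; ring
      rw [hPt]; ring
    intro r₁ r₂ h₁ h₂ t ht
    obtain ⟨hge₁, heq₁⟩ := key r₁ h₁ t ht
    obtain ⟨hge₂, heq₂⟩ := key r₂ h₂ t ht
    have : t - (n:ℝ) * r₁ t = t - (n:ℝ) * r₂ t := by
      apply hΦ.injOn (mem_Ici.mpr hge₁) (mem_Ici.mpr hge₂)
      show (m:ℝ) * (t - n * r₁ t) + n * P (t - n * r₁ t)
        = (m:ℝ) * (t - n * r₂ t) + n * P (t - n * r₂ t)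
      rw [heq₁, heq₂]
    have h3 : (n:ℝ) * r₁ t = (n:ℝ) * r₂ t := by linarith
    exact mul_left_cancel₀ hn0.ne' h3
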